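/- Let V and W be finite-dimensional real vector spaces and let P ⊆ V and Q ⊆ W be nonempty polytopes. Define the tensor product polytope P ⊗ Q := convexHull ℝ {(x ⊗ y, x, y) : x ∈ extremePoints ℝ P, y ∈ extremePoints ℝ Q} ⊆ (V ⊗[ℝ] W) × V × W. Then the set of extreme points of P ⊗ Q is exactly {(x ⊗ y, x, y) : x ∈ extremePoints ℝ P, y ∈ extremePoints ℝ Q}; i.e., the vertices of P ⊗ Q are precisely the points (v ⊗ w, v, w) for v a vertex of P and w a vertex of Q. -/

import Mathlib

open scoped TensorProduct

/-- A polytope: the convex hull of a finite set of points. -/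
def IsPolytope {V : Type*} [AddCommGroup V] [Module ℝ V] (P : Set V) : Prop :=
  ∃ F : Finset V, P = convexHull ℝ (F : Set V)

/-- The tensor product of two polytopes `P ⊆ V` and `Q ⊆ W`:
the convex hull of `{(x ⊗ y, x, y) : x a vertex of P, y a vertex of Q}`
in `(V ⊗[ℝ] W) × V × W`. -/
def tensorPolytope {V W : Type*} [AddCommGroup V] [Module ℝ V] [AddCommGroup W] [Module ℝ W]
    (P : Set V) (Q : Set W) : Set ((V ⊗[ℝ] W) × V × W) :=
  convexHull ℝ
    {p | ∃ x ∈ Set.extremePoints ℝ P, ∃ y ∈ Set.extremePoints ℝ Q,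
      p = (x ⊗ₜ[ℝ] y, x, y)}

/-- If `x` is an extreme point of a convex set `P` and `x` is a convex combination of points
of `P`, then every point with nonzero weight equals `x`. -/
lemma extreme_of_comb {V : Type*} [AddCommGroup V] [Module ℝ V] {P : Set V} (hP : Convex ℝ P)
    {x : V} (hx : x ∈ Set.extremePoints ℝ P) {ι : Type*} (t : Finset ι) (w : ι → ℝ)
    (z : ι → V) (hw0 : ∀ i ∈ t, 0 ≤ w i) (hw1 : ∑ i ∈ t, w i = 1)
    (hz : ∀ i ∈ t, z i ∈ P) (hsum : ∑ i ∈ t, w i • z i = x) :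
    ∀ i ∈ t, w i ≠ 0 → z i = x := by
  by_contra h
  push_neg at h
  obtain ⟨i₀, hi₀t, hwi₀, hzi₀⟩ := h
  classical
  set T := t.filter (fun i => z i ≠ x) with hT
  set μ := ∑ i ∈ T, w i with hμ
  have hμpos : 0 < μ := by
    apply Finset.sum_pos' (fun i hi => hw0 i (Finset.mem_filter.mp hi).1)
    exact ⟨i₀, Finset.mem_filter.mpr ⟨hi₀t, hzi₀⟩, lt_of_le_of_ne (hw0 i₀ hi₀t) (Ne.symm hwi₀)⟩
  have hconv : Convex ℝ (P \ {x}) := (hP.mem_extremePoints_iff_convex_diff.mp hx).2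
  set zbar : V := μ⁻¹ • ∑ i ∈ T, w i • z i with hzbar
  have hzbar_mem : zbar ∈ P \ {x} := by
    have := hconv.sum_mem (t := T) (w := fun i => μ⁻¹ * w i) (z := z)
      (fun i hi => mul_nonneg (inv_nonneg.mpr hμpos.le) (hw0 i (Finset.mem_filter.mp hi).1))
      (by rw [← Finset.mul_sum, ← hμ, inv_mul_cancel₀ hμpos.ne'])
      (fun i hi => ⟨hz i (Finset.mem_filter.mp hi).1,
        (Finset.mem_filter.mp hi).2⟩)
    simpa [hzbar, Finset.smul_sum, mul_smul] using this
  have hsplit : (1 - μ) • x + μ • zbar = x := by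
    have h1 : ∑ i ∈ t.filter (fun i => ¬ z i ≠ x), w i • z i
        = (∑ i ∈ t.filter (fun i => ¬ z i ≠ x), w i) • x := by
      rw [Finset.sum_smul]
      refine Finset.sum_congr rfl fun i hi => ?_
      have : z i = x := not_not.mp (Finset.mem_filter.mp hi).2
      rw [this]
    have h2 : (∑ i ∈ t.filter (fun i => ¬ z i ≠ x), w i) = 1 - μ := by
      have h5 := Finset.sum_filter_add_sum_filter_not t (fun i => z i ≠ x) w
      rw [hw1, ← hT, ← hμ] at h5
      linarith
    have h3 : μ • zbar = ∑ i ∈ T, w i • z i := by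
      rw [hzbar, smul_inv_smul₀ hμpos.ne']
    calc (1 - μ) • x + μ • zbar
        = ∑ i ∈ t.filter (fun i => ¬ z i ≠ x), w i • z i + ∑ i ∈ T, w i • z i := by
          rw [h3, ← h2, ← h1]
      _ = ∑ i ∈ t, w i • z i := by
          rw [add_comm, hT]
          exact Finset.sum_filter_add_sum_filter_not t _ _
      _ = x := hsum
  have h4 : μ • zbar = μ • x := by
    linear_combination (norm := module) hsplit
  have : zbar = x := smul_right_injective V hμpos.ne' h4
  exact hzbar_mem.2 this

theorem stmt_13 {V W : Type*}
    [AddCommGroup V] [Module ℝ V] [FiniteDimensional ℝ V]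
    [AddCommGroup W] [Module ℝ W] [FiniteDimensional ℝ W]
    (P : Set V) (Q : Set W)
    (hP : IsPolytope P) (hPne : P.Nonempty)
    (hQ : IsPolytope Q) (hQne : Q.Nonempty) :
    Set.extremePoints ℝ (tensorPolytope P Q) =
      {p | ∃ x ∈ Set.extremePoints ℝ P, ∃ y ∈ Set.extremePoints ℝ Q,
        p = (x ⊗ₜ[ℝ] y, x, y)} := by
  classical
  obtain ⟨F, hF⟩ := hP
  obtain ⟨G, hG⟩ := hQ
  have hPconv : Convex ℝ P := hF ▸ convex_convexHull ℝ _
  have hQconv : Convex ℝ Q := hG ▸ convex_convexHull ℝ _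
  set S : Set ((V ⊗[ℝ] W) × V × W) :=
    {p | ∃ x ∈ Set.extremePoints ℝ P, ∃ y ∈ Set.extremePoints ℝ Q,
      p = (x ⊗ₜ[ℝ] y, x, y)} with hS
  -- the hull is contained in univ ×ˢ (P ×ˢ Q)
  have hsub : convexHull ℝ S ⊆ (Set.univ : Set (V ⊗[ℝ] W)) ×ˢ (P ×ˢ Q) := by
    apply convexHull_min
    · rintro p ⟨x, hx, y, hy, rfl⟩
      exact ⟨trivial, extremePoints_subset hx, extremePoints_subset hy⟩
    · exact convex_univ.prod (hPconv.prod hQconv)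
  -- fiber lemma
  have fiber : ∀ x ∈ Set.extremePoints ℝ P, ∀ y ∈ Set.extremePoints ℝ Q,
      ∀ a ∈ convexHull ℝ S, a.2.1 = x → a.2.2 = y → a = (x ⊗ₜ[ℝ] y, x, y) := by
    intro x hx y hy a ha hax hay
    rw [convexHull_eq] at ha
    obtain ⟨ι, t, w, z, hw0, hw1, hzS, hcm⟩ := ha
    rw [Finset.centerMass_eq_of_sum_1 _ _ hw1] at hcm
    have hz21 : ∀ i ∈ t, (z i).2.1 ∈ P := fun i hi => by
      obtain ⟨xi, hxi, yi, hyi, hzi⟩ := hzS i hi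
      rw [hzi]; exact extremePoints_subset hxi
    have hz22 : ∀ i ∈ t, (z i).2.2 ∈ Q := fun i hi => by
      obtain ⟨xi, hxi, yi, hyi, hzi⟩ := hzS i hi
      rw [hzi]; exact extremePoints_subset hyi
    have hsum21 : ∑ i ∈ t, w i • (z i).2.1 = x := by
      rw [← hax, ← hcm]
      simp [Prod.snd_sum, Prod.fst_sum]
    have hsum22 : ∑ i ∈ t, w i • (z i).2.2 = y := by
      rw [← hay, ← hcm]
      simp [Prod.snd_sum, Prod.fst_sum]
    have hxall := extreme_of_comb hPconv hx t w (fun i => (z i).2.1) hw0 hw1 hz21 hsum21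
    have hyall := extreme_of_comb hQconv hy t w (fun i => (z i).2.2) hw0 hw1 hz22 hsum22
    have hzeq : ∀ i ∈ t, w i • z i = w i • ((x ⊗ₜ[ℝ] y, x, y) : (V ⊗[ℝ] W) × V × W) := by
      intro i hi
      by_cases hwi : w i = 0
      · simp [hwi]
      · obtain ⟨xi, hxi, yi, hyi, hzi⟩ := hzS i hi
        have h1 : (z i).2.1 = x := hxall i hi hwi
        have h2 : (z i).2.2 = y := hyall i hi hwi
        rw [hzi] at h1 h2 ⊢
        simp only at h1 h2
        rw [h1, h2]
    rw [← hcm, Finset.sum_congr rfl hzeq, ← Finset.sum_smul, hw1, one_smul]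
  ext p
  constructor
  · intro hp
    exact extremePoints_convexHull_subset hp
  · rintro ⟨x, hx, y, hy, rfl⟩
    refine ⟨subset_convexHull ℝ S ⟨x, hx, y, hy, rfl⟩, ?_⟩
    rintro a ha b hb ⟨θ, τ, hθ, hτ, hθτ, habp⟩
    have haP : a.2.1 ∈ P := (hsub ha).2.1
    have hbP : b.2.1 ∈ P := (hsub hb).2.1
    have haQ : a.2.2 ∈ Q := (hsub ha).2.2
    have hbQ : b.2.2 ∈ Q := (hsub hb).2.2
    have hxseg : x ∈ openSegment ℝ a.2.1 b.2.1 := by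
      refine ⟨θ, τ, hθ, hτ, hθτ, ?_⟩
      have := congrArg (fun p : (V ⊗[ℝ] W) × V × W => p.2.1) habp
      simpa using this
    have hyseg : y ∈ openSegment ℝ a.2.2 b.2.2 := by
      refine ⟨θ, τ, hθ, hτ, hθτ, ?_⟩
      have := congrArg (fun p : (V ⊗[ℝ] W) × V × W => p.2.2) habp
      simpa using this
    have hax := hx.2 haP hbP hxseg
    have hay := hy.2 haQ hbQ hyseg
    exact fiber x hx y hy a ha hax hay
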